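/- Let $\{Z_t\}_{t\ge 0}$ be a real sequence with $Z_0 = 0$. Suppose there exist an integer $t_0 > 0$ and real constants $\theta > 0$, $\delta_{\max} > 0$, and $0 < \zeta \le \delta_{\max}$ such that for all $t \ge 0$: $|Z_{t+1} - Z_t| \le \delta_{\max}$, and whenever $Z_t \ge \theta$ one has $Z_{t+t_0} - Z_t \le -t_0\zeta$. Then for all $t \ge 0$, $Z_t \le \theta + t_0\delta_{\max} + t_0 \frac{4\delta_{\max}^2}{\zeta}\log\left(\frac{8\delta_{\max}^2}{\zeta^2}\right)$. -/
import Mathlib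


theorem drift_lemma (Z : ℕ → ℝ) (hZ0 : Z 0 = 0) (t0 : ℕ) (ht0 : 0 < t0)
    (θ δmax ζ : ℝ) (hθ : 0 < θ) (hδ : 0 < δmax) (hζ0 : 0 < ζ) (hζδ : ζ ≤ δmax)
    (hstep : ∀ t : ℕ, |Z (t + 1) - Z t| ≤ δmax)
    (hdrift : ∀ t : ℕ, θ ≤ Z t → Z (t + t0) - Z t ≤ -(t0 : ℝ) * ζ) :
    ∀ t : ℕ, Z t ≤ θ + (t0 : ℝ) * δmax +
      (t0 : ℝ) * (4 * δmax ^ 2 / ζ) * Real.log (8 * δmax ^ 2 / ζ ^ 2) := by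
  have hstep' : ∀ t, Z (t + 1) ≤ Z t + δmax := by
    intro t
    have := (abs_le.mp (hstep t)).2
    linarith
  have hgrow : ∀ s n : ℕ, Z (s + n) ≤ Z s + (n : ℝ) * δmax := by
    intro s n
    induction n with
    | zero => simp
    | succ n ih =>
      have h1 : Z (s + (n + 1)) ≤ Z (s + n) + δmax := by
        simpa [Nat.add_assoc] using hstep' (s + n)
      push_cast
      push_cast at ih
      linarith
  have key : ∀ t, Z t ≤ θ + (t0 : ℝ) * δmax := by
    intro t
    induction t using Nat.strong_induction_on with
    | _ t ih =>
      by_cases h : t < t0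
      · have h1 : Z (0 + t) ≤ Z 0 + (t : ℝ) * δmax := hgrow 0 t
        have h2 : (t : ℝ) ≤ (t0 : ℝ) := by exact_mod_cast h.le
        simp only [Nat.zero_add, hZ0, zero_add] at h1
        nlinarith
      · push_neg at h
        set s := t - t0 with hs
        have hst : s + t0 = t := Nat.sub_add_cancel h
        have hslt : s < t := by omega
        have ht0pos : (0 : ℝ) < t0 := by exact_mod_cast ht0
        by_cases hθs : θ ≤ Z s
        · have hd := hdrift s hθs
          rw [hst] at hd
          have hZs := ih s hslt
          nlinarith
        · push_neg at hθs
          have h1 := hgrow s t0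
          rw [hst] at h1
          linarith
  intro t
  have hlog : 0 ≤ Real.log (8 * δmax ^ 2 / ζ ^ 2) := by
    apply Real.log_nonneg
    rw [le_div_iff₀ (by positivity)]
    nlinarith
  have ht0pos : (0 : ℝ) < t0 := by exact_mod_cast ht0
  have hextra : 0 ≤ (t0 : ℝ) * (4 * δmax ^ 2 / ζ) * Real.log (8 * δmax ^ 2 / ζ ^ 2) := by
    positivity
  linarith [key t]
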